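/- Let (C, S, W) be a category with strong and weak equivalences and let M be a full subcategory of the category of cofibrant objects. Then the functor M[S⁻¹, C] → C[W⁻¹] induced by γ' is fully faithful. In particular it reflects isomorphisms: if a morphism w between objects of M in C[S⁻¹] becomes an isomorphism in C[W⁻¹], then w is already an isomorphism in C[S⁻¹]. -/

import Mathlib

open CategoryTheory

universe v u

variable {C : Type u} [Category.{v} C]

/-- `(C, S, W)` is a category with strong and weak equivalences. -/
structure StrongWeak (S W : MorphismProperty C) : Prop where
  comp_S : ∀ ⦃X Y Z : C⦄ (f : X ⟶ Y) (g : Y ⟶ Z), S f → S g → S (f ≫ g)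
  comp_W : ∀ ⦃X Y Z : C⦄ (f : X ⟶ Y) (g : Y ⟶ Z), W f → W g → W (f ≫ g)
  iso_S : ∀ ⦃X Y : C⦄ (f : X ⟶ Y), IsIso f → S f
  iso_W : ∀ ⦃X Y : C⦄ (f : X ⟶ Y), IsIso f → W f
  le_sat : ∀ ⦃X Y : C⦄ (f : X ⟶ Y), S f → IsIso (W.Q.map f)

/-- An object `M` is `(S, W)`-cofibrant. -/
def Cofibrant (S W : MorphismProperty C) (M : C) : Prop :=
  ∀ ⦃Y X : C⦄ (w : Y ⟶ X), W w →
    Function.Bijective (fun g : S.Q.obj M ⟶ S.Q.obj Y => g ≫ S.Q.map w)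

/-- The canonical functor `γ' : C[S⁻¹] ⥤ C[W⁻¹]`. -/
noncomputable def gammaPrime (S W : MorphismProperty C)
    (h : ∀ ⦃X Y : C⦄ (f : X ⟶ Y), S f → IsIso (W.Q.map f)) :
    S.Localization ⥤ W.Localization :=
  Localization.Construction.lift W.Q (fun _ _ f hf => h f hf)

/-- For a full subcategory `M` of the cofibrant objects (given by a predicate `P` on objects
which implies cofibrancy), the functor `M[S⁻¹, C] ⥤ C[W⁻¹]` induced by `γ'` is fully
faithful (hom-wise, `γ'` is bijective between objects of `M`); in particular it reflects
isomorphisms. -/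
theorem relative_localization_fully_faithful (S W : MorphismProperty C)
    (hsw : StrongWeak S W) (P : C → Prop) (hP : ∀ M : C, P M → Cofibrant S W M) :
    (∀ (M N : C), P M → P N →
      Function.Bijective (fun g : S.Q.obj M ⟶ S.Q.obj N =>
        (gammaPrime S W hsw.le_sat).map g)) ∧
    (∀ (M N : C), P M → P N → ∀ w : S.Q.obj M ⟶ S.Q.obj N,
      IsIso ((gammaPrime S W hsw.le_sat).map w) → IsIso w) := by
  set γ := gammaPrime S W hsw.le_sat with hγ
  have main : ∀ (M N : C), P M → P N →
      Function.Bijective (fun g : S.Q.obj M ⟶ S.Q.obj N => γ.map g) := by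
    intro M N hM hN
    -- the corepresentable functor
    let coyoS : S.Localization ⥤ Type (max u v) := coyoneda.obj (Opposite.op (S.Q.obj M))
    let G : C ⥤ Type (max u v) := S.Q ⋙ coyoS
    have hG : W.IsInvertedBy G := by
      intro X Y w hw
      rw [CategoryTheory.isIso_iff_bijective]
      exact hP M hM w hw
    let F : W.Localization ⥤ Type (max u v) := Localization.lift G hG W.Q
    let e : W.Q ⋙ F ≅ G := Localization.fac G hG W.Q
    let x₀ : F.obj (W.Q.obj M) := e.inv.app M (𝟙 (S.Q.obj M))
    let ψ : (W.Q.obj M ⟶ W.Q.obj N) → (S.Q.obj M ⟶ S.Q.obj N) :=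
      fun φ => e.hom.app N (F.map φ x₀)
    -- left inverse
    have hinj : ∀ g : S.Q.obj M ⟶ S.Q.obj N, ψ (γ.map g) = g := by
      intro g
      let κ : coyoS ⟶ γ ⋙ F :=
        Localization.Construction.natTransExtension (e.inv : G ⟶ W.Q ⋙ F)
      have happ : ∀ (X : C), κ.app (S.Q.obj X) = e.inv.app X := fun X =>
        Localization.Construction.NatTransExtension.app_eq _ X
      have hnat := κ.naturality g
      have := types_congr_hom hnat (𝟙 (S.Q.obj M))
      simp only [coyoS, coyoneda, types_comp_apply, happ M, happ N] at this
      -- this : e.inv.app N (𝟙 ≫ g) = F.map (γ.map g) (e.inv.app M 𝟙)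
      have h2 : e.inv.app N g = F.map (γ.map g) x₀ := by
        exact (by rw [show e.inv.app N g = e.inv.app N (𝟙 _ ≫ g) by rw [Category.id_comp]]; exact this)
      show e.hom.app N (F.map (γ.map g) x₀) = g
      rw [← h2]
      exact types_congr_hom (e.inv_hom_id_app N) g
    -- right inverse
    have hsurj : ∀ φ : W.Q.obj M ⟶ W.Q.obj N, γ.map (ψ φ) = φ := by
      intro φ
      let coyoW : W.Localization ⥤ Type (max u v) := coyoneda.obj (Opposite.op (W.Q.obj M))
      let τ : G ⟶ W.Q ⋙ coyoW :=
        { app := fun X => TypeCat.ofHom (fun (g : G.obj X) => (γ.map g : W.Q.obj M ⟶ W.Q.obj X))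
          naturality := by
            intro X Y f
            ext g
            show γ.map (g ≫ S.Q.map f) = γ.map g ≫ W.Q.map f
            rw [γ.map_comp]; rfl }
      let α : F ⟶ coyoW :=
        Localization.Construction.natTransExtension
          ((e.hom ≫ τ : W.Q ⋙ F ⟶ W.Q ⋙ coyoW))
      have happ : ∀ (X : C), α.app (W.Q.obj X) = e.hom.app X ≫ τ.app X := fun X =>
        Localization.Construction.NatTransExtension.app_eq _ X
      have hnat := α.naturality φ
      have h := types_congr_hom hnat x₀
      simp only [happ M, happ N, types_comp_apply] at h
      -- h : τ.app N (e.hom.app N (F.map φ x₀)) = (τ.app M (e.hom.app M x₀)) ≫ φ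
      have hx : e.hom.app M x₀ = 𝟙 (S.Q.obj M) := types_congr_hom (e.inv_hom_id_app M) _
      show γ.map (e.hom.app N (F.map φ x₀)) = φ
      have h' : γ.map (e.hom.app N (F.map φ x₀)) =
          (γ.map (e.hom.app M x₀)) ≫ φ := h
      rw [h', hx, γ.map_id]
      exact Category.id_comp φ
    exact Function.bijective_iff_has_inverse.2 ⟨ψ, hinj, hsurj⟩
  refine ⟨main, fun M N hM hN w hw => ?_⟩
  obtain ⟨g, hg⟩ := (main N M hN hM).2 (inv (γ.map w))
  refine ⟨g, ?_, ?_⟩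
  · apply (main M M hM hM).1
    simp [hg]
  · apply (main N N hN hN).1
    simp [hg]
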